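/- Let p ∈ (0,1], let each element of [n] be independently included in a set V' with probability p, and fix B ⊆ [n] and x ∉ B such that for every y ≥ x, |[x,y] ∩ B| ≤ α·|[x,y]| (x is not in the left α-shadow taken to the right). Then the probability that the first ℓ elements of V' to the right of x (if they exist) all lie in B is at most O(√ℓ)·α^{ℓ−1}. -/

import Mathlib

open scoped Classical

/-- Probability of the outcome `S` when each element of `Fin n` is included
independently with probability `p`. -/
noncomputable def bernoulliWeight (n : ℕ) (p : ℝ) (S : Finset (Fin n)) : ℝ :=
  p ^ S.card * (1 - p) ^ (n - S.card)

/-- The event that `S` contains at least `ℓ` elements to the right of `x` and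
the first `ℓ` of them (in increasing order) all lie in `B`. -/
def firstFail (n ℓ : ℕ) (x : Fin n) (B S : Finset (Fin n)) : Prop :=
  ℓ ≤ (S.filter (fun y => x < y)).card ∧
    ∀ y ∈ ((S.filter (fun y => x < y)).sort (· ≤ ·)).take ℓ, y ∈ B

lemma sum_powerset_weight {n : ℕ} (p : ℝ) (K : Finset (Fin n)) :
    ∑ U ∈ K.powerset, p ^ U.card * (1 - p) ^ (K.card - U.card) = 1 := by
  have h := Finset.prod_add (fun _ : Fin n => p) (fun _ => (1 : ℝ) - p) K
  simp only [add_sub_cancel, Finset.prod_const, one_pow] at h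
  conv_rhs => rw [h]
  refine Finset.sum_congr rfl fun U hU => ?_
  rw [Finset.mem_powerset] at hU
  rw [Finset.card_sdiff_of_subset hU]

lemma sum_weight_fiber {n : ℕ} (p : ℝ) (I A : Finset (Fin n)) (hAI : A ⊆ I) :
    ∑ S ∈ Finset.univ.filter (fun S => S ∩ I = A), bernoulliWeight n p S
      = p ^ A.card * (1 - p) ^ (I.card - A.card) := by
  have key : ∑ S ∈ Finset.univ.filter (fun S => S ∩ I = A), bernoulliWeight n p S
      = ∑ U ∈ Iᶜ.powerset, (p ^ A.card * (1 - p) ^ (I.card - A.card)) *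
          (p ^ U.card * (1 - p) ^ (Iᶜ.card - U.card)) := by
    refine Finset.sum_nbij' (fun S => S \ I) (fun U => A ∪ U) ?_ ?_ ?_ ?_ ?_
    · intro S hS
      rw [Finset.mem_powerset]
      intro a ha
      simp only [Finset.mem_sdiff] at ha
      simp [Finset.mem_compl, ha.2]
    · intro U hU
      rw [Finset.mem_powerset] at hU
      simp only [Finset.mem_filter, Finset.mem_univ, true_and]
      rw [Finset.union_inter_distrib_right]
      have h1 : A ∩ I = A := Finset.inter_eq_left.2 hAI
      have h2 : U ∩ I = ∅ := by
        rw [Finset.eq_empty_iff_forall_notMem]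
        intro a ha
        simp only [Finset.mem_inter] at ha
        have := hU ha.1
        simp [Finset.mem_compl] at this
        exact this ha.2
      rw [h1, h2, Finset.union_empty]
    · intro S hS
      simp only [Finset.mem_filter, Finset.mem_univ, true_and] at hS
      rw [← hS]
      ext a
      simp only [Finset.mem_union, Finset.mem_inter, Finset.mem_sdiff]
      tauto
    · intro U hU
      rw [Finset.mem_powerset] at hU
      ext a
      simp only [Finset.mem_sdiff, Finset.mem_union]
      constructor
      · rintro ⟨h1 | h1, h2⟩
        · exact absurd (hAI h1) h2
        · exact h1
      · intro h
        have := hU h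
        simp only [Finset.mem_compl] at this
        exact ⟨Or.inr h, this⟩
    · intro S hS
      simp only [Finset.mem_filter, Finset.mem_univ, true_and] at hS
      have hdisj : Disjoint A (S \ I) := by
        refine Finset.disjoint_left.2 fun a ha h2 => ?_
        exact (Finset.mem_sdiff.1 h2).2 (hAI ha)
      have hS2 : S = A ∪ (S \ I) := by
        rw [← hS]; ext a
        simp only [Finset.mem_union, Finset.mem_inter, Finset.mem_sdiff]; tauto
      have hcard : S.card = A.card + (S \ I).card := by
        conv_lhs => rw [hS2]
        exact Finset.card_union_of_disjoint hdisj
      have hsub : S \ I ⊆ Iᶜ := fun a ha => by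
        simp only [Finset.mem_sdiff] at ha; simp [Finset.mem_compl, ha.2]
      have h1 : A.card ≤ I.card := Finset.card_le_card hAI
      have h2 : (S \ I).card ≤ Iᶜ.card := Finset.card_le_card hsub
      have h3 : I.card + Iᶜ.card = n := by
        rw [Finset.card_add_card_compl]; simp
      unfold bernoulliWeight
      rw [hcard]
      have hexp : n - (A.card + (S \ I).card)
          = (I.card - A.card) + (Iᶜ.card - (S \ I).card) := by omega
      rw [hexp, pow_add, pow_add]
      ring
  rw [key, ← Finset.mul_sum, sum_powerset_weight p Iᶜ, mul_one]

lemma sum_weight_event {n : ℕ} (p : ℝ) (I : Finset (Fin n)) (Q : Finset (Fin n) → Prop)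
    [DecidablePred Q] :
    ∑ S : Finset (Fin n), (if Q (S ∩ I) then bernoulliWeight n p S else 0)
      = ∑ A ∈ I.powerset.filter Q, p ^ A.card * (1 - p) ^ (I.card - A.card) := by
  have hmaps : ∀ S ∈ (Finset.univ : Finset (Finset (Fin n))), S ∩ I ∈ I.powerset := by
    intro S _; exact Finset.mem_powerset.2 Finset.inter_subset_right
  rw [← Finset.sum_fiberwise_of_maps_to hmaps
    (fun S => if Q (S ∩ I) then bernoulliWeight n p S else 0)]
  rw [Finset.sum_filter]
  refine Finset.sum_congr rfl fun A hA => ?_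
  rw [Finset.mem_powerset] at hA
  by_cases hQ : Q A
  · rw [if_pos hQ, ← sum_weight_fiber p I A hA]
    refine Finset.sum_congr rfl fun S hS => ?_
    simp only [Finset.mem_filter] at hS
    rw [hS.2, if_pos hQ]
  · rw [if_neg hQ]
    refine Finset.sum_eq_zero fun S hS => ?_
    simp only [Finset.mem_filter] at hS
    rw [hS.2, if_neg hQ]

lemma count_subsets {n ℓ : ℕ} (K : Finset (Fin n)) (y : Fin n) (hy : y ∈ K) (hl : 1 ≤ ℓ) :
    (K.powerset.filter (fun A => y ∈ A ∧ A.card = ℓ)).card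
      = (K.card - 1).choose (ℓ - 1) := by
  rw [← Finset.card_erase_of_mem hy, ← Finset.card_powersetCard]
  refine Finset.card_nbij' (fun A => A.erase y) (fun T => insert y T) ?_ ?_ ?_ ?_
  · intro A hA
    simp only [Finset.mem_coe, Finset.mem_filter, Finset.mem_powerset] at hA
    rw [Finset.mem_coe, Finset.mem_powersetCard]
    exact ⟨Finset.erase_subset_erase y hA.1, by
      rw [Finset.card_erase_of_mem hA.2.1, hA.2.2]⟩
  · intro T hT
    rw [Finset.mem_coe, Finset.mem_powersetCard] at hT
    simp only [Finset.mem_coe, Finset.mem_filter, Finset.mem_powerset]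
    have hyT : y ∉ T := fun h => Finset.notMem_erase y K (hT.1 h)
    refine ⟨?_, Finset.mem_insert_self y T, ?_⟩
    · intro a ha
      rcases Finset.mem_insert.1 ha with h | h
      · rwa [h]
      · exact Finset.erase_subset y K (hT.1 h)
    · rw [Finset.card_insert_of_notMem hyT, hT.2]
      omega
  · intro A hA
    simp only [Finset.mem_coe, Finset.mem_filter] at hA
    exact Finset.insert_erase hA.2.1
  · intro T hT
    rw [Finset.mem_coe, Finset.mem_powersetCard] at hT
    have hyT : y ∉ T := fun h => Finset.notMem_erase y K (hT.1 h)
    exact Finset.erase_insert hyT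

def firstFailAux (n ℓ : ℕ) (x : Fin n) (B S : Finset (Fin n)) : Prop :=
  ℓ ≤ (S.filter (fun y => x < y)).card ∧
    ∀ y ∈ ((S.filter (fun y => x < y)).sort (· ≤ ·)).take ℓ, y ∈ B

lemma exists_ellth {n ℓ : ℕ} (x : Fin n) (B S : Finset (Fin n)) (hl : 1 ≤ ℓ)
    (h : firstFailAux n ℓ x B S) :
    ∃ y : Fin n, x < y ∧ y ∈ S ∧ (S ∩ Finset.Ioc x y).card = ℓ ∧ (S ∩ Finset.Ioc x y) ⊆ B := by
  classical
  set F := S.filter (fun y => x < y) with hF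
  set L := F.sort (· ≤ ·) with hL
  have hlen : L.length = F.card := Finset.length_sort _
  have hcard : ℓ ≤ F.card := h.1
  have hlt : ℓ - 1 < L.length := by omega
  set y := L.get ⟨ℓ - 1, hlt⟩ with hy
  have hsorted : StrictMono L.get := Finset.sortedLT_sort F
  have hyL : y ∈ L := List.get_mem L ⟨ℓ - 1, hlt⟩
  have hyF : y ∈ F := (Finset.mem_sort _).1 hyL
  have hchar : ∀ z, z ∈ F → (z ≤ y ↔ z ∈ L.take ℓ) := by
    intro z hz
    have hzL : z ∈ L := (Finset.mem_sort _).2 hz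
    obtain ⟨i, hzi⟩ := List.mem_iff_get.1 hzL
    constructor
    · intro hzy
      rw [List.mem_take_iff_getElem]
      have hile : i ≤ (⟨ℓ - 1, hlt⟩ : Fin L.length) := by
        rw [← hsorted.le_iff_le]
        rw [hzi]; exact hzy
      refine ⟨i.1, ?_, ?_⟩
      · have := i.isLt
        simp only [lt_inf_iff]
        exact ⟨by have h2 : i.1 ≤ ℓ - 1 := Fin.le_def.1 hile; omega, i.isLt⟩
      · rw [← List.get_eq_getElem]
        exact hzi
    · intro hz'
      rw [List.mem_take_iff_getElem] at hz'
      obtain ⟨j, hj, hje⟩ := hz'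
      simp only [lt_inf_iff] at hj
      have hjle : (⟨j, hj.2⟩ : Fin L.length) ≤ ⟨ℓ - 1, hlt⟩ := by
        rw [Fin.le_def]; simp; omega
      have := hsorted.monotone hjle
      rw [List.get_eq_getElem, List.get_eq_getElem] at this
      simp only at this
      rw [hje] at this
      exact this
  have hkey : S ∩ Finset.Ioc x y = F.filter (fun z => z ≤ y) := by
    ext z
    simp only [Finset.mem_inter, Finset.mem_Ioc, hF, Finset.mem_filter]
    tauto
  have hkey2 : F.filter (fun z => z ≤ y) = (L.take ℓ).toFinset := by
    ext z
    simp only [Finset.mem_filter, List.mem_toFinset]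
    constructor
    · rintro ⟨h1, h2⟩; exact (hchar z h1).1 h2
    · intro hz
      have hzL : z ∈ L := List.mem_of_mem_take hz
      have hzF : z ∈ F := (Finset.mem_sort _).1 hzL
      exact ⟨hzF, (hchar z hzF).2 hz⟩
  have hnodup : (L.take ℓ).Nodup := (Finset.sort_nodup _ _).sublist (List.take_sublist _ _)
  have hcard2 : (S ∩ Finset.Ioc x y).card = ℓ := by
    rw [hkey, hkey2, List.toFinset_card_of_nodup hnodup, List.length_take]
    omega
  refine ⟨y, ?_, ?_, hcard2, ?_⟩
  · exact (Finset.mem_filter.1 hyF).2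
  · exact (Finset.mem_filter.1 hyF).1
  · intro z hz
    rw [hkey, hkey2, List.mem_toFinset] at hz
    exact h.2 z hz

lemma ellth_unique {n ℓ : ℕ} (x : Fin n) (S : Finset (Fin n)) :
    (Finset.univ.filter
      (fun y : Fin n => x < y ∧ y ∈ S ∧ (S ∩ Finset.Ioc x y).card = ℓ)).card ≤ 1 := by
  classical
  rw [Finset.card_le_one]
  intro a ha b hb
  simp only [Finset.mem_filter, Finset.mem_univ, true_and] at ha hb
  by_contra hne
  have key : ∀ a b : Fin n, a < b → x < a → a ∈ S → (S ∩ Finset.Ioc x a).card = ℓ →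
      x < b → b ∈ S → (S ∩ Finset.Ioc x b).card = ℓ → False := by
    intro a b hab hxa haS hca hxb hbS hcb
    have hsub : S ∩ Finset.Ioc x a ⊂ S ∩ Finset.Ioc x b := by
      constructor
      · exact Finset.inter_subset_inter (le_refl S) (Finset.Ioc_subset_Ioc_right hab.le)
      · intro hcon
        have hbmem : b ∈ S ∩ Finset.Ioc x b := by
          simp [Finset.mem_inter, Finset.mem_Ioc, hbS, hxb]
        have := hcon hbmem
        simp only [Finset.mem_inter, Finset.mem_Ioc] at this
        exact absurd this.2.2 (not_le.2 hab)
    have := Finset.card_lt_card hsub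
    omega
  rcases lt_trichotomy a b with h | h | h
  · exact key a b h ha.1 ha.2.1 ha.2.2 hb.1 hb.2.1 hb.2.2
  · exact hne h
  · exact key b a h hb.1 hb.2.1 hb.2.2 ha.1 ha.2.1 ha.2.2

lemma choose_ratio {k b m : ℕ} {α : ℝ} (hα0 : 0 < α) (hα1 : α ≤ 1) (hbm : b ≤ m)
    (hsh : (b : ℝ) + 1 ≤ α * ((m : ℝ) + 2)) :
    (b.choose k : ℝ) ≤ Real.exp 3 * α ^ k * (m.choose k : ℝ) := by
  have he1 : (1 : ℝ) ≤ Real.exp 3 := by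
    rw [← Real.exp_zero]; exact Real.exp_le_exp.2 (by norm_num)
  rcases Nat.eq_zero_or_pos k with hk0 | hk1
  · subst hk0; simpa using he1
  rcases lt_or_ge b k with hbk | hkb
  · rw [Nat.choose_eq_zero_of_lt hbk]
    push_cast
    positivity
  have hm1 : 1 ≤ m := le_trans (le_trans hk1 hkb) hbm
  have hnat : b.choose k * m ^ k ≤ b ^ k * m.choose k := by
    have h1 : b.descFactorial k * m ^ k ≤ b ^ k * m.descFactorial k := by
      rw [Nat.descFactorial_eq_prod_range, Nat.descFactorial_eq_prod_range]
      have e1 : m ^ k = ∏ _i ∈ Finset.range k, m := by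
        rw [Finset.prod_const, Finset.card_range]
      have e2 : b ^ k = ∏ _i ∈ Finset.range k, b := by
        rw [Finset.prod_const, Finset.card_range]
      rw [e1, e2, ← Finset.prod_mul_distrib, ← Finset.prod_mul_distrib]
      refine Finset.prod_le_prod' fun i hi => ?_
      rw [Finset.mem_range] at hi
      have hib : i ≤ b := le_trans (le_of_lt hi) hkb
      have q1 : (b - i) * m = b * m - i * m := Nat.sub_mul b i m
      have q2 : b * (m - i) = b * m - i * b := by
        rw [mul_comm b (m - i), Nat.sub_mul, mul_comm m b, mul_comm i b]
      have q3 : i * b ≤ i * m := Nat.mul_le_mul_left i hbm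
      have q4 : i * m ≤ b * m := Nat.mul_le_mul_right m hib
      omega
    have h2 := Nat.descFactorial_eq_factorial_mul_choose b k
    have h3 := Nat.descFactorial_eq_factorial_mul_choose m k
    rw [h2, h3] at h1
    have hk : 0 < k.factorial := Nat.factorial_pos k
    refine Nat.le_of_mul_le_mul_left ?_ hk
    calc k.factorial * (b.choose k * m ^ k) = k.factorial * b.choose k * m ^ k := by ring
      _ ≤ b ^ k * (k.factorial * m.choose k) := h1
      _ = k.factorial * (b ^ k * m.choose k) := by ring
  have hmR : (1 : ℝ) ≤ (m : ℝ) := by exact_mod_cast hm1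
  set t : ℝ := α * m with ht
  have ht0 : 0 < t := by
    have : (0:ℝ) < m := by linarith
    positivity
  have hbt : (b : ℝ) ≤ t + 1 := by nlinarith
  have hkbR : (k : ℝ) ≤ (b : ℝ) := by exact_mod_cast hkb
  have hkt : (k : ℝ) + 1 ≤ 3 * t := by nlinarith
  have hpow : (b : ℝ) ^ k ≤ Real.exp 3 * α ^ k * (m : ℝ) ^ k := by
    have h1 : (b : ℝ) ^ k ≤ (t + 1) ^ k := pow_le_pow_left₀ (Nat.cast_nonneg b) hbt k
    have h2 : (t + 1) ^ k = t ^ k * (1 + 1 / t) ^ k := by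
      rw [← mul_pow]; congr 1; field_simp
    have h3 : (1 + 1 / t) ≤ Real.exp (1 / t) := by
      have := Real.add_one_le_exp (1 / t); linarith
    have h4 : (1 + 1 / t) ^ k ≤ Real.exp (1 / t) ^ k :=
      pow_le_pow_left₀ (by positivity) h3 k
    have h5 : Real.exp (1 / t) ^ k = Real.exp (k / t) := by
      rw [← Real.exp_nat_mul, mul_one_div]
    have h6 : (k : ℝ) / t ≤ 3 := by rw [div_le_iff₀ ht0]; nlinarith
    have h7 : Real.exp ((k : ℝ) / t) ≤ Real.exp 3 := Real.exp_le_exp.2 h6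
    have h8 : t ^ k = α ^ k * (m : ℝ) ^ k := by rw [ht, mul_pow]
    have htk : (0:ℝ) ≤ t ^ k := by positivity
    calc (b : ℝ) ^ k ≤ (t + 1) ^ k := h1
      _ = t ^ k * (1 + 1 / t) ^ k := h2
      _ ≤ t ^ k * Real.exp ((k : ℝ) / t) := by
          rw [← h5]; exact mul_le_mul_of_nonneg_left h4 htk
      _ ≤ t ^ k * Real.exp 3 := mul_le_mul_of_nonneg_left h7 htk
      _ = Real.exp 3 * α ^ k * (m : ℝ) ^ k := by rw [h8]; ring
  have hcast : (b.choose k : ℝ) * (m : ℝ) ^ k ≤ (b : ℝ) ^ k * (m.choose k : ℝ) := by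
    exact_mod_cast hnat
  have hmk : (0:ℝ) < (m : ℝ) ^ k := by positivity
  rw [← mul_le_mul_iff_of_pos_right hmk]
  calc (b.choose k : ℝ) * (m : ℝ) ^ k ≤ (b : ℝ) ^ k * (m.choose k : ℝ) := hcast
    _ ≤ (Real.exp 3 * α ^ k * (m : ℝ) ^ k) * (m.choose k : ℝ) := by
        exact mul_le_mul_of_nonneg_right hpow (Nat.cast_nonneg _)
    _ = Real.exp 3 * α ^ k * (m.choose k : ℝ) * (m : ℝ) ^ k := by ring

def EvB (n ℓ : ℕ) (x : Fin n) (B : Finset (Fin n)) (y : Fin n) (S : Finset (Fin n)) : Prop :=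
  x < y ∧ y ∈ S ∧ (S ∩ Finset.Ioc x y).card = ℓ ∧ (S ∩ Finset.Ioc x y) ⊆ B

def Ev' (n ℓ : ℕ) (x : Fin n) (y : Fin n) (S : Finset (Fin n)) : Prop :=
  x < y ∧ y ∈ S ∧ (S ∩ Finset.Ioc x y).card = ℓ

lemma per_y {n ℓ : ℕ} {p α : ℝ} (x y : Fin n) (B : Finset (Fin n))
    (hp0 : 0 < p) (hp1 : p ≤ 1) (hα0 : 0 < α) (hα1 : α ≤ 1) (hℓ : 1 ≤ ℓ)
    (hxB : x ∉ B) (hxy : x < y)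
    (hsh : ((Finset.Icc x y ∩ B).card : ℝ) ≤ α * ((Finset.Icc x y).card : ℝ)) :
    ∑ S : Finset (Fin n), (if EvB n ℓ x B y S then bernoulliWeight n p S else 0)
      ≤ Real.exp 3 * α ^ (ℓ - 1) *
        ∑ S : Finset (Fin n), (if Ev' n ℓ x y S then bernoulliWeight n p S else 0) := by
  classical
  set I := Finset.Ioc x y with hIdef
  have hyI : y ∈ I := Finset.mem_Ioc.2 ⟨hxy, le_refl y⟩
  have hP0 : (0:ℝ) ≤ p ^ ℓ * (1 - p) ^ (I.card - ℓ) := by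
    have : (0:ℝ) ≤ 1 - p := by linarith
    positivity
  -- rewrite both sums via sum_weight_event
  have h1 : ∑ S : Finset (Fin n), (if EvB n ℓ x B y S then bernoulliWeight n p S else 0)
      = ∑ A ∈ I.powerset.filter (fun A => y ∈ A ∧ A.card = ℓ ∧ A ⊆ B),
          p ^ A.card * (1 - p) ^ (I.card - A.card) := by
    rw [← sum_weight_event p I (fun A => y ∈ A ∧ A.card = ℓ ∧ A ⊆ B)]
    refine Finset.sum_congr rfl fun S _ => ?_
    refine if_congr ?_ rfl rfl
    unfold EvB
    constructor
    · rintro ⟨_, h2, h3, h4⟩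
      exact ⟨Finset.mem_inter.2 ⟨h2, hyI⟩, h3, h4⟩
    · rintro ⟨h2, h3, h4⟩
      exact ⟨hxy, (Finset.mem_inter.1 h2).1, h3, h4⟩
  have h1' : ∑ S : Finset (Fin n), (if Ev' n ℓ x y S then bernoulliWeight n p S else 0)
      = ∑ A ∈ I.powerset.filter (fun A => y ∈ A ∧ A.card = ℓ),
          p ^ A.card * (1 - p) ^ (I.card - A.card) := by
    rw [← sum_weight_event p I (fun A => y ∈ A ∧ A.card = ℓ)]
    refine Finset.sum_congr rfl fun S _ => ?_
    refine if_congr ?_ rfl rfl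
    unfold Ev'
    constructor
    · rintro ⟨_, h2, h3⟩
      exact ⟨Finset.mem_inter.2 ⟨h2, hyI⟩, h3⟩
    · rintro ⟨h2, h3⟩
      exact ⟨hxy, (Finset.mem_inter.1 h2).1, h3⟩
  have hsum_const : ∀ (F : Finset (Finset (Fin n))), (∀ A ∈ F, A.card = ℓ) →
      ∑ A ∈ F, p ^ A.card * (1 - p) ^ (I.card - A.card)
        = F.card * (p ^ ℓ * (1 - p) ^ (I.card - ℓ)) := by
    intro F hF
    rw [Finset.sum_congr rfl (fun A hA => by rw [hF A hA]), Finset.sum_const, nsmul_eq_mul]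
  rw [h1, h1', hsum_const _ (fun A hA => ((Finset.mem_filter.1 hA).2).2.1),
    hsum_const _ (fun A hA => ((Finset.mem_filter.1 hA).2).2)]
  -- card computations
  set m := (Finset.Ioo x y).card with hm
  set b := (Finset.Ioo x y ∩ B).card with hb
  have hyIoo : y ∉ Finset.Ioo x y := by simp
  have hIeq : I = insert y (Finset.Ioo x y) := (Finset.Ioo_insert_right hxy).symm
  have hI : I.card = m + 1 := by rw [hIeq, Finset.card_insert_of_notMem hyIoo]
  have hcount' : (I.powerset.filter (fun A => y ∈ A ∧ A.card = ℓ)).card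
      = m.choose (ℓ - 1) := by
    rw [count_subsets I y hyI hℓ, hI]
    simp
  have hxI : x ∉ I := by simp [hIdef]
  have hIcc : Finset.Icc x y = insert x I := (Finset.Ioc_insert_left hxy.le).symm
  have hIcc_card : (Finset.Icc x y).card = m + 2 := by
    rw [hIcc, Finset.card_insert_of_notMem hxI, hI]
  have hIccB : Finset.Icc x y ∩ B = I ∩ B := by
    rw [hIcc, Finset.insert_inter_of_notMem hxB]
  have hbm : b ≤ m := Finset.card_le_card Finset.inter_subset_left
  rw [hcount']
  by_cases hyB : y ∈ B
  · have hfeq : I.powerset.filter (fun A => y ∈ A ∧ A.card = ℓ ∧ A ⊆ B)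
        = (I ∩ B).powerset.filter (fun A => y ∈ A ∧ A.card = ℓ) := by
      ext A
      simp only [Finset.mem_filter, Finset.mem_powerset, Finset.subset_inter_iff]
      tauto
    have hyIB : y ∈ I ∩ B := Finset.mem_inter.2 ⟨hyI, hyB⟩
    have hIB : (I ∩ B).card = b + 1 := by
      have heq : I ∩ B = insert y (Finset.Ioo x y ∩ B) := by
        rw [hIeq, Finset.insert_inter_of_mem hyB]
      rw [heq, Finset.card_insert_of_notMem (fun hc => hyIoo (Finset.mem_inter.1 hc).1)]
    have hcountB : (I.powerset.filter (fun A => y ∈ A ∧ A.card = ℓ ∧ A ⊆ B)).card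
        = b.choose (ℓ - 1) := by
      rw [hfeq, count_subsets (I ∩ B) y hyIB hℓ, hIB]
      simp
    rw [hcountB]
    -- shadow inequality in ℝ
    have hshR : (b : ℝ) + 1 ≤ α * ((m : ℝ) + 2) := by
      rw [hIccB] at hsh
      rw [hIB] at hsh
      rw [hIcc_card] at hsh
      push_cast at hsh
      convert hsh using 2 <;> push_cast <;> ring
    have hkey := choose_ratio (k := ℓ - 1) hα0 hα1 hbm hshR
    calc (b.choose (ℓ-1) : ℝ) * (p ^ ℓ * (1 - p) ^ (I.card - ℓ))
        ≤ (Real.exp 3 * α ^ (ℓ-1) * (m.choose (ℓ-1) : ℝ)) * (p ^ ℓ * (1 - p) ^ (I.card - ℓ)) :=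
          mul_le_mul_of_nonneg_right hkey hP0
      _ = Real.exp 3 * α ^ (ℓ-1) * ((m.choose (ℓ-1) : ℝ) * (p ^ ℓ * (1 - p) ^ (I.card - ℓ))) := by
          ring
  · have hempty : I.powerset.filter (fun A => y ∈ A ∧ A.card = ℓ ∧ A ⊆ B) = ∅ := by
      rw [Finset.eq_empty_iff_forall_notMem]
      intro A hA
      rw [Finset.mem_filter] at hA
      exact hyB (hA.2.2.2 hA.2.1)
    rw [hempty]
    simp only [Finset.card_empty, Nat.cast_zero, zero_mul]
    have h0 : (0:ℝ) ≤ (m.choose (ℓ-1) : ℝ) * (p ^ ℓ * (1 - p) ^ (I.card - ℓ)) :=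
      mul_nonneg (Nat.cast_nonneg _) hP0
    have hak : (0:ℝ) ≤ α ^ (ℓ-1) := by positivity
    exact mul_nonneg (mul_nonneg (Real.exp_pos 3).le hak) h0

/-- If `x ∉ B` is outside the (rightward) `α`-shadow of `B`, then the
probability that the first `ℓ` elements of the random set to the right of `x`
all lie in `B` is at most `O(√ℓ)·α^(ℓ−1)`. -/
theorem stmt_16 :
    ∃ C : ℝ, 0 < C ∧ ∀ (n ℓ : ℕ) (p α : ℝ) (x : Fin n) (B : Finset (Fin n)),
      0 < p → p ≤ 1 → 0 < α → α ≤ 1 → 1 ≤ ℓ → x ∉ B →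
      (∀ y : Fin n, x ≤ y →
        ((Finset.Icc x y ∩ B).card : ℝ) ≤ α * ((Finset.Icc x y).card : ℝ)) →
      (∑ S : Finset (Fin n), if firstFail n ℓ x B S then bernoulliWeight n p S else 0)
        ≤ C * Real.sqrt ℓ * α ^ (ℓ - 1) := by
  classical
  refine ⟨Real.exp 3, Real.exp_pos 3, ?_⟩
  intro n ℓ p α x B hp0 hp1 hα0 hα1 hℓ hxB hshadow
  have hwnn : ∀ S : Finset (Fin n), 0 ≤ bernoulliWeight n p S := by
    intro S
    unfold bernoulliWeight
    have h1 : (0:ℝ) ≤ 1 - p := by linarith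
    positivity
  -- Step 1 : bound by sum over y of events
  have step1 : (∑ S : Finset (Fin n), if firstFail n ℓ x B S then bernoulliWeight n p S else 0)
      ≤ ∑ y : Fin n, ∑ S : Finset (Fin n),
          (if EvB n ℓ x B y S then bernoulliWeight n p S else 0) := by
    rw [Finset.sum_comm]
    refine Finset.sum_le_sum fun S _ => ?_
    by_cases hS : firstFail n ℓ x B S
    · rw [if_pos hS]
      obtain ⟨y, hy1, hy2, hy3, hy4⟩ := exists_ellth x B S hℓ ⟨hS.1, hS.2⟩
      have hterm := Finset.single_le_sum
        (f := fun y => if EvB n ℓ x B y S then bernoulliWeight n p S else 0)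
        (fun i _ => by split_ifs; exacts [hwnn S, le_rfl]) (Finset.mem_univ y)
      rwa [if_pos (show EvB n ℓ x B y S from ⟨hy1, hy2, hy3, hy4⟩)] at hterm
    · rw [if_neg hS]
      refine Finset.sum_nonneg fun y _ => ?_
      split_ifs
      exacts [hwnn S, le_rfl]
  -- Step 2 : per-y bound
  have step2 : ∑ y : Fin n, ∑ S : Finset (Fin n),
        (if EvB n ℓ x B y S then bernoulliWeight n p S else 0)
      ≤ Real.exp 3 * α ^ (ℓ - 1) * ∑ y : Fin n, ∑ S : Finset (Fin n),
          (if Ev' n ℓ x y S then bernoulliWeight n p S else 0) := by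
    rw [Finset.mul_sum]
    refine Finset.sum_le_sum fun y _ => ?_
    by_cases hxy : x < y
    · exact per_y x y B hp0 hp1 hα0 hα1 hℓ hxB hxy (hshadow y hxy.le)
    · have hz1 : ∀ S : Finset (Fin n), ¬ EvB n ℓ x B y S := fun S h => hxy h.1
      have hz2 : ∀ S : Finset (Fin n), ¬ Ev' n ℓ x y S := fun S h => hxy h.1
      rw [Finset.sum_congr rfl (fun S _ => if_neg (hz1 S)),
        Finset.sum_congr rfl (fun S _ => if_neg (hz2 S))]
      simp
  -- Step 3 : total probability bound
  have step3 : ∑ y : Fin n, ∑ S : Finset (Fin n),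
      (if Ev' n ℓ x y S then bernoulliWeight n p S else 0) ≤ 1 := by
    rw [Finset.sum_comm]
    have htot : ∑ S : Finset (Fin n), bernoulliWeight n p S = 1 := by
      have h := sum_powerset_weight p (Finset.univ : Finset (Fin n))
      rw [Finset.powerset_univ] at h
      rw [← h]
      refine Finset.sum_congr rfl fun S _ => ?_
      unfold bernoulliWeight
      rw [Finset.card_univ, Fintype.card_fin]
    rw [← htot]
    refine Finset.sum_le_sum fun S _ => ?_
    rw [Finset.sum_ite, Finset.sum_const, Finset.sum_const_zero, add_zero, nsmul_eq_mul]
    have hcard : (Finset.univ.filter (fun y : Fin n => Ev' n ℓ x y S)).card ≤ 1 := by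
      have h2 := ellth_unique (ℓ := ℓ) x S
      have heq : Finset.univ.filter (fun y : Fin n => Ev' n ℓ x y S)
          = Finset.univ.filter
            (fun y : Fin n => x < y ∧ y ∈ S ∧ (S ∩ Finset.Ioc x y).card = ℓ) := by
        refine Finset.filter_congr fun y _ => ?_
        unfold Ev'
        rfl
      rw [heq]
      exact h2
    calc ((Finset.univ.filter (fun y : Fin n => Ev' n ℓ x y S)).card : ℝ) * bernoulliWeight n p S
        ≤ 1 * bernoulliWeight n p S := by
          exact mul_le_mul_of_nonneg_right (by exact_mod_cast hcard) (hwnn S)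
      _ = bernoulliWeight n p S := one_mul _
  -- assemble
  have hsqrt : (1:ℝ) ≤ Real.sqrt ℓ := by
    rw [show (1:ℝ) = Real.sqrt 1 from (Real.sqrt_one).symm]
    exact Real.sqrt_le_sqrt (by exact_mod_cast hℓ)
  have hak : (0:ℝ) ≤ α ^ (ℓ - 1) := by positivity
  calc (∑ S : Finset (Fin n), if firstFail n ℓ x B S then bernoulliWeight n p S else 0)
      ≤ ∑ y : Fin n, ∑ S : Finset (Fin n),
          (if EvB n ℓ x B y S then bernoulliWeight n p S else 0) := step1
    _ ≤ Real.exp 3 * α ^ (ℓ - 1) * ∑ y : Fin n, ∑ S : Finset (Fin n),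
          (if Ev' n ℓ x y S then bernoulliWeight n p S else 0) := step2
    _ ≤ Real.exp 3 * α ^ (ℓ - 1) * 1 := by
        refine mul_le_mul_of_nonneg_left step3 ?_
        exact mul_nonneg (Real.exp_pos 3).le hak
    _ ≤ Real.exp 3 * Real.sqrt ℓ * α ^ (ℓ - 1) := by
        rw [mul_one]
        nlinarith [mul_nonneg (mul_nonneg (Real.exp_pos 3).le hak) (sub_nonneg.2 hsqrt)]
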